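/- arXiv:q-alg/9702009 — 3 statements merged into one kernel-verified Lean document; each statement's English description precedes it below -/
import Mathlib

section
/- Arnold's identity: for three distinct points z1, z2, z3 in the complex plane, the sum of wedge products ω12 ∧ ω23 + ω23 ∧ ω31 + ω31 ∧ ω12 equals zero, where ωij = (dzi − dzj)/(zi − zj). -/
/-- **Arnold's identity.** For three distinct points `z 0, z 1, z 2` in ℂ, the
cyclic sum `ω₁₂∧ω₂₃ + ω₂₃∧ω₃₁ + ω₃₁∧ω₁₂` of wedge products of the 1-forms
`ω i j = (dz i − dz j)/(z i − z j)` vanishes, evaluated on any pair of tangent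
vectors `v w` at the point `z` of the configuration space `X₃`. -/
theorem arnold_identity (z : Fin 3 → ℂ) (hz : ∀ i j : Fin 3, i ≠ j → z i ≠ z j)
    (v w : Fin 3 → ℂ) :
    (let ω : Fin 3 → Fin 3 → (Fin 3 → ℂ) → ℂ := fun i j u => (u i - u j) / (z i - z j)
     let wedge : ((Fin 3 → ℂ) → ℂ) → ((Fin 3 → ℂ) → ℂ) → ℂ :=
       fun α β => α v * β w - α w * β v
     wedge (ω 0 1) (ω 1 2) + wedge (ω 1 2) (ω 2 0) + wedge (ω 2 0) (ω 0 1)) = 0 := by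
  have h01 : z 0 - z 1 ≠ 0 := sub_ne_zero.mpr (hz 0 1 (by decide))
  have h12 : z 1 - z 2 ≠ 0 := sub_ne_zero.mpr (hz 1 2 (by decide))
  have h20 : z 2 - z 0 ≠ 0 := sub_ne_zero.mpr (hz 2 0 (by decide))
  simp only
  field_simp
  ring
end

section
/- The formal Knizhnik–Zamolodchikov connection is flat: if elements Ωij (1 ≤ i < j ≤ n) of an associative algebra satisfy the infinitesimal pure braid relations ([Ωij, Ωkl] = 0 when {i,j} ∩ {k,l} = ∅, and [Ωij, Ωik + Ωjk] = 0 for distinct i,j,k, with the convention Ωji = Ωij), then the connection Ω = Σ_{i<j} Ωij ωij on the configuration space Xn of n distinct points in ℂ satisfies dΩ + Ω∧Ω = 0. -/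
open Finset



private noncomputable def cfKZ {n : ℕ} (z v w : Fin n → ℂ) (i j k l : Fin n) : ℂ :=
  ((v i - v j)/(z i - z j)) * ((w k - w l)/(z k - z l))
    - ((w i - w j)/(z i - z j)) * ((v k - v l)/(z k - z l))

private lemma flipdiv {n : ℕ} (p q : Fin n → ℂ) (i j : Fin n) :
    (p j - p i) / (q j - q i) = (p i - p j) / (q i - q j) := by
  rw [← neg_sub (p i), ← neg_sub (q i), neg_div_neg_eq]

private lemma cf_sym1 {n : ℕ} (z v w : Fin n → ℂ) (i j k l : Fin n) :
    cfKZ z v w j i k l = cfKZ z v w i j k l := by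
  unfold cfKZ; rw [flipdiv v z i j, flipdiv w z i j]

private lemma cf_sym2 {n : ℕ} (z v w : Fin n → ℂ) (i j k l : Fin n) :
    cfKZ z v w i j l k = cfKZ z v w i j k l := by
  unfold cfKZ; rw [flipdiv v z k l, flipdiv w z k l]

private lemma cf_diag1 {n : ℕ} (z v w : Fin n → ℂ) (i k l : Fin n) :
    cfKZ z v w i i k l = 0 := by simp [cfKZ]

private lemma cf_diag2 {n : ℕ} (z v w : Fin n → ℂ) (i j k : Fin n) :
    cfKZ z v w i j k k = 0 := by simp [cfKZ]

private lemma cf_anti {n : ℕ} (z v w : Fin n → ℂ) (i j k l : Fin n) :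
    cfKZ z v w k l i j = - cfKZ z v w i j k l := by unfold cfKZ; ring

section
variable {A : Type*} [NormedRing A] [NormedAlgebra ℂ A] {n : ℕ}
  (Ω : Fin n → Fin n → A) (z v w : Fin n → ℂ)

private noncomputable def gqKZ (i j k l : Fin n) : A :=
  cfKZ z v w i j k l • (Ω i j * Ω k l - Ω k l * Ω i j)

variable (hsymm : ∀ i j, Ω j i = Ω i j)
  (hdisj : ∀ i j k l : Fin n, i ≠ k → i ≠ l → j ≠ k → j ≠ l →
      Ω i j * Ω k l = Ω k l * Ω i j)
  (hbraid : ∀ i j k : Fin n, i ≠ j → j ≠ k → i ≠ k →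
      Ω i j * (Ω i k + Ω j k) = (Ω i k + Ω j k) * Ω i j)
  (hz : Function.Injective z)

private lemma gq_diag1 (i k l : Fin n) : gqKZ Ω z v w i i k l = 0 := by
  rw [gqKZ, cf_diag1, zero_smul]

private lemma gq_diag2 (i j k : Fin n) : gqKZ Ω z v w i j k k = 0 := by
  rw [gqKZ, cf_diag2, zero_smul]

include hdisj in
private lemma gq_disj (i j k l : Fin n) (h1 : i ≠ k) (h2 : i ≠ l) (h3 : j ≠ k) (h4 : j ≠ l) :
    gqKZ Ω z v w i j k l = 0 := by
  rw [gqKZ, hdisj i j k l h1 h2 h3 h4, sub_self, smul_zero]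

private lemma gq_eq1 (i j : Fin n) : gqKZ Ω z v w i j i j = 0 := by
  rw [gqKZ, sub_self, smul_zero]

include hsymm in
private lemma gq_eq2 (i j : Fin n) : gqKZ Ω z v w i j j i = 0 := by
  rw [gqKZ, hsymm j i, sub_self, smul_zero]

include hsymm in
private lemma gq_sym1 (i j k l : Fin n) : gqKZ Ω z v w j i k l = gqKZ Ω z v w i j k l := by
  rw [gqKZ, gqKZ, cf_sym1, hsymm j i]

include hsymm in
private lemma gq_sym2 (i j k l : Fin n) : gqKZ Ω z v w i j l k = gqKZ Ω z v w i j k l := by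
  rw [gqKZ, gqKZ, cf_sym2, hsymm l k]

end

private lemma arnold {n : ℕ} (z v w : Fin n → ℂ) (s t u : Fin n)
    (h1 : z s - z t ≠ 0) (h2 : z s - z u ≠ 0) (h3 : z t - z u ≠ 0) :
    (((v s - v t)/(z s - z t)) * ((w s - w u)/(z s - z u))
      - ((w s - w t)/(z s - z t)) * ((v s - v u)/(z s - z u)))
    + (((v t - v u)/(z t - z u)) * ((w t - w s)/(z t - z s))
      - ((w t - w u)/(z t - z u)) * ((v t - v s)/(z t - z s)))
    + (((v u - v s)/(z u - z s)) * ((w u - w t)/(z u - z t))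
      - ((w u - w s)/(z u - z s)) * ((v u - v t)/(z u - z t))) = 0 := by
  have h1' : z t - z s ≠ 0 := fun h => h1 (by linear_combination -h)
  have h2' : z u - z s ≠ 0 := fun h => h2 (by linear_combination -h)
  have h3' : z u - z t ≠ 0 := fun h => h3 (by linear_combination -h)
  field_simp
  ring

section
variable {A : Type*} [NormedRing A] [NormedAlgebra ℂ A] {n : ℕ}
  (Ω : Fin n → Fin n → A) (z v w : Fin n → ℂ)
  (hsymm : ∀ i j, Ω j i = Ω i j)
  (hdisj : ∀ i j k l : Fin n, i ≠ k → i ≠ l → j ≠ k → j ≠ l →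
      Ω i j * Ω k l = Ω k l * Ω i j)
  (hbraid : ∀ i j k : Fin n, i ≠ j → j ≠ k → i ≠ k →
      Ω i j * (Ω i k + Ω j k) = (Ω i k + Ω j k) * Ω i j)
  (hz : Function.Injective z)

include hsymm hbraid hz in
private lemma gq_cyc (s t u : Fin n) :
    gqKZ Ω z v w s t s u + gqKZ Ω z v w t u t s + gqKZ Ω z v w u s u t = 0 := by
  by_cases hst : s = t
  · subst hst
    rw [gq_diag1, gq_diag2, gq_eq1, add_zero, add_zero]
  by_cases htu : t = u
  · subst htu
    rw [gq_eq1, gq_diag1, gq_diag2, add_zero, add_zero]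
  by_cases hsu : s = u
  · subst hsu
    rw [gq_diag2, gq_eq1, gq_diag1, zero_add, add_zero]
  -- main case: s, t, u distinct
  have hzst : z s - z t ≠ 0 := sub_ne_zero.mpr fun e => hst (hz e)
  have hzsu : z s - z u ≠ 0 := sub_ne_zero.mpr fun e => hsu (hz e)
  have hztu : z t - z u ≠ 0 := sub_ne_zero.mpr fun e => htu (hz e)
  have hX1 : Ω t u * Ω t s - Ω t s * Ω t u = Ω s t * Ω s u - Ω s u * Ω s t := by
    have h := hbraid s t u hst htu hsu
    rw [mul_add, add_mul] at h
    rw [hsymm s t, sub_eq_sub_iff_add_eq_add, add_comm]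
    exact h.symm
  have hX2 : Ω u s * Ω u t - Ω u t * Ω u s = Ω s t * Ω s u - Ω s u * Ω s t := by
    have h := hbraid s u t hsu (Ne.symm htu) hst
    rw [mul_add, add_mul, hsymm t u] at h
    rw [hsymm s u, hsymm t u, sub_eq_sub_iff_add_eq_add, add_comm]
    exact h
  rw [gqKZ, gqKZ, gqKZ, hX1, hX2, ← add_smul, ← add_smul]
  rw [show cfKZ z v w s t s u + cfKZ z v w t u t s + cfKZ z v w u s u t = 0 by
    unfold cfKZ; linear_combination arnold z v w s t u hzst hzsu hztu]
  rw [zero_smul]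

end

section
variable {A : Type*} [NormedRing A] [NormedAlgebra ℂ A] {n : ℕ}
  (Ω : Fin n → Fin n → A) (z v w : Fin n → ℂ)
  (hsymm : ∀ i j, Ω j i = Ω i j)
  (hdisj : ∀ i j k l : Fin n, i ≠ k → i ≠ l → j ≠ k → j ≠ l →
      Ω i j * Ω k l = Ω k l * Ω i j)
  (hbraid : ∀ i j k : Fin n, i ≠ j → j ≠ k → i ≠ k →
      Ω i j * (Ω i k + Ω j k) = (Ω i k + Ω j k) * Ω i j)
  (hz : Function.Injective z)

include hsymm hbraid hz in
private lemma gq_triple :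
    (∑ s : Fin n, ∑ a : Fin n, ∑ b : Fin n, gqKZ Ω z v w s a s b) = 0 := by
  have rot1 : (∑ s : Fin n, ∑ a : Fin n, ∑ b : Fin n, gqKZ Ω z v w a b a s)
      = ∑ s : Fin n, ∑ a : Fin n, ∑ b : Fin n, gqKZ Ω z v w s a s b :=
    calc (∑ s : Fin n, ∑ a : Fin n, ∑ b : Fin n, gqKZ Ω z v w a b a s)
        = ∑ a : Fin n, ∑ s : Fin n, ∑ b : Fin n, gqKZ Ω z v w a b a s := Finset.sum_comm
      _ = ∑ a : Fin n, ∑ b : Fin n, ∑ s : Fin n, gqKZ Ω z v w a b a s :=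
          Finset.sum_congr rfl fun _ _ => Finset.sum_comm
  have rot2 : (∑ s : Fin n, ∑ a : Fin n, ∑ b : Fin n, gqKZ Ω z v w b s b a)
      = ∑ s : Fin n, ∑ a : Fin n, ∑ b : Fin n, gqKZ Ω z v w s a s b :=
    calc (∑ s : Fin n, ∑ a : Fin n, ∑ b : Fin n, gqKZ Ω z v w b s b a)
        = ∑ s : Fin n, ∑ b : Fin n, ∑ a : Fin n, gqKZ Ω z v w b s b a :=
          Finset.sum_congr rfl fun _ _ => Finset.sum_comm
      _ = ∑ b : Fin n, ∑ s : Fin n, ∑ a : Fin n, gqKZ Ω z v w b s b a := Finset.sum_comm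
  have key : (∑ s : Fin n, ∑ a : Fin n, ∑ b : Fin n,
      (gqKZ Ω z v w s a s b + gqKZ Ω z v w a b a s + gqKZ Ω z v w b s b a)) = 0 :=
    Finset.sum_eq_zero fun s _ => Finset.sum_eq_zero fun a _ => Finset.sum_eq_zero fun b _ =>
      gq_cyc Ω z v w hsymm hbraid hz s a b
  simp only [Finset.sum_add_distrib] at key
  rw [rot1, rot2] at key
  have h3 : (3 : ℂ) • (∑ s : Fin n, ∑ a : Fin n, ∑ b : Fin n, gqKZ Ω z v w s a s b) = 0 := by
    rw [show (3 : ℂ) = 1 + 1 + 1 by norm_num, add_smul, add_smul, one_smul]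
    exact key
  calc (∑ s : Fin n, ∑ a : Fin n, ∑ b : Fin n, gqKZ Ω z v w s a s b)
      = (3⁻¹ : ℂ) • ((3 : ℂ) • ∑ s : Fin n, ∑ a : Fin n, ∑ b : Fin n, gqKZ Ω z v w s a s b) := by
        rw [smul_smul]; norm_num
    _ = 0 := by rw [h3, smul_zero]

end

section
variable {A : Type*} [NormedRing A] [NormedAlgebra ℂ A] {n : ℕ}
  (Ω : Fin n → Fin n → A) (z v w : Fin n → ℂ)
  (hsymm : ∀ i j, Ω j i = Ω i j)
  (hdisj : ∀ i j k l : Fin n, i ≠ k → i ≠ l → j ≠ k → j ≠ l →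
      Ω i j * Ω k l = Ω k l * Ω i j)
  (hbraid : ∀ i j k : Fin n, i ≠ j → j ≠ k → i ≠ k →
      Ω i j * (Ω i k + Ω j k) = (Ω i k + Ω j k) * Ω i j)
  (hz : Function.Injective z)

include hsymm hdisj in
private lemma gq_inner2 (i j : Fin n) :
    (∑ k : Fin n, ∑ l : Fin n, gqKZ Ω z v w i j k l)
      = ((∑ l : Fin n, gqKZ Ω z v w i j i l) + (∑ l : Fin n, gqKZ Ω z v w i j j l))
        + ((∑ l : Fin n, gqKZ Ω z v w i j i l) + (∑ l : Fin n, gqKZ Ω z v w i j j l)) := by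
  by_cases hij : i = j
  · subst hij
    have e0 : ∀ k, (∑ l : Fin n, gqKZ Ω z v w i i k l) = 0 :=
      fun k => Finset.sum_eq_zero fun l _ => gq_diag1 Ω z v w i k l
    rw [Finset.sum_eq_zero fun k _ => e0 k, e0 i]
    simp
  have hji : j ∈ univ.erase i := Finset.mem_erase.mpr ⟨fun e => hij e.symm, mem_univ j⟩
  rw [← Finset.add_sum_erase univ (fun k => ∑ l : Fin n, gqKZ Ω z v w i j k l) (mem_univ i),
      ← Finset.add_sum_erase (univ.erase i) (fun k => ∑ l : Fin n, gqKZ Ω z v w i j k l) hji]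
  have hEk : ∀ k ∈ (univ.erase i).erase j, (∑ l : Fin n, gqKZ Ω z v w i j k l)
      = gqKZ Ω z v w i j i k + gqKZ Ω z v w i j j k := by
    intro k hk
    have hkj : k ≠ j := (Finset.mem_erase.mp hk).1
    have hki : k ≠ i := (Finset.mem_erase.mp (Finset.mem_erase.mp hk).2).1
    have hrest : ∑ l ∈ (univ.erase i).erase j, gqKZ Ω z v w i j k l = 0 :=
      Finset.sum_eq_zero fun l hl => by
        have hlj : l ≠ j := (Finset.mem_erase.mp hl).1
        have hli : l ≠ i := (Finset.mem_erase.mp (Finset.mem_erase.mp hl).2).1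
        exact gq_disj Ω z v w hdisj i j k l (Ne.symm hki) (Ne.symm hli) (Ne.symm hkj) (Ne.symm hlj)
    rw [← Finset.add_sum_erase univ (fun l => gqKZ Ω z v w i j k l) (mem_univ i),
        ← Finset.add_sum_erase (univ.erase i) (fun l => gqKZ Ω z v w i j k l) hji,
        hrest, add_zero, gq_sym2 Ω z v w hsymm i j i k, gq_sym2 Ω z v w hsymm i j j k]
  rw [Finset.sum_congr rfl hEk, Finset.sum_add_distrib]
  have hsum1 : ∑ k ∈ (univ.erase i).erase j, gqKZ Ω z v w i j i k
      = ∑ l : Fin n, gqKZ Ω z v w i j i l := by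
    rw [← Finset.add_sum_erase univ (fun l => gqKZ Ω z v w i j i l) (mem_univ i),
        ← Finset.add_sum_erase (univ.erase i) (fun l => gqKZ Ω z v w i j i l) hji,
        gq_diag2, gq_eq1, zero_add, zero_add]
  have hsum2 : ∑ k ∈ (univ.erase i).erase j, gqKZ Ω z v w i j j k
      = ∑ l : Fin n, gqKZ Ω z v w i j j l := by
    rw [← Finset.add_sum_erase univ (fun l => gqKZ Ω z v w i j j l) (mem_univ i),
        ← Finset.add_sum_erase (univ.erase i) (fun l => gqKZ Ω z v w i j j l) hji,
        gq_eq2 Ω z v w hsymm, gq_diag2, zero_add, zero_add]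
  rw [hsum1, hsum2]
  abel

end

lemma halfSum {n : ℕ} {M : Type*} [AddCommMonoid M] [Module ℂ M] (f : Fin n → Fin n → M)
    (hsym : ∀ i j, f j i = f i j) (hdiag : ∀ i, f i i = 0) :
    ∑ i : Fin n, ∑ j ∈ univ.filter (fun j => i < j), f i j
      = (2⁻¹ : ℂ) • ∑ i : Fin n, ∑ j : Fin n, f i j := by
  have split : ∀ i : Fin n, (∑ j : Fin n, f i j)
      = (∑ j ∈ univ.filter (fun j => i < j), f i j)
        + ∑ j ∈ univ.filter (fun j => j < i), f i j := by
    intro i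
    rw [← Finset.sum_filter_add_sum_filter_not univ (fun j => i < j) (f i)]
    congr 1
    refine (Finset.sum_subset ?_ ?_).symm
    · intro j hj
      simp only [mem_filter, mem_univ, true_and] at hj ⊢
      exact not_lt_of_gt hj
    · intro j hj hj2
      simp only [mem_filter, mem_univ, true_and] at hj hj2
      have : j = i := le_antisymm (not_lt.mp hj) (not_lt.mp hj2)
      rw [this, hdiag]
  have L_eq : ∑ i : Fin n, ∑ j ∈ univ.filter (fun j => j < i), f i j
      = ∑ i : Fin n, ∑ j ∈ univ.filter (fun j => i < j), f i j := by
    rw [Finset.sum_sigma', Finset.sum_sigma']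
    refine Finset.sum_nbij' (fun p => ⟨p.2, p.1⟩) (fun p => ⟨p.2, p.1⟩) ?_ ?_ ?_ ?_ ?_
    · intro a ha
      simp only [Finset.mem_sigma, mem_filter, mem_univ, true_and] at ha ⊢
      exact ha
    · intro a ha
      simp only [Finset.mem_sigma, mem_filter, mem_univ, true_and] at ha ⊢
      exact ha
    · intro a _; rfl
    · intro a _; rfl
    · intro a _; exact (hsym a.1 a.2).symm
  rw [Finset.sum_congr rfl (fun i _ => split i), Finset.sum_add_distrib, L_eq, smul_add,
    ← add_smul]
  norm_num

section
variable {A : Type*} [NormedRing A] [NormedAlgebra ℂ A] {n : ℕ}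
  (Ω : Fin n → Fin n → A) (z v w : Fin n → ℂ)
  (hsymm : ∀ i j, Ω j i = Ω i j)
  (hdisj : ∀ i j k l : Fin n, i ≠ k → i ≠ l → j ≠ k → j ≠ l →
      Ω i j * Ω k l = Ω k l * Ω i j)
  (hbraid : ∀ i j k : Fin n, i ≠ j → j ≠ k → i ≠ k →
      Ω i j * (Ω i k + Ω j k) = (Ω i k + Ω j k) * Ω i j)
  (hz : Function.Injective z)

include hsymm hdisj hbraid hz in
private lemma quad_zero :
    (∑ i : Fin n, ∑ j ∈ univ.filter (fun j => i < j), ∑ k : Fin n,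
      ∑ l ∈ univ.filter (fun l => k < l), cfKZ z v w i j k l • (Ω i j * Ω k l)) = 0 := by
  -- halve the outer and inner sorted sums
  have houter : (∑ i : Fin n, ∑ j ∈ univ.filter (fun j => i < j), ∑ k : Fin n,
      ∑ l ∈ univ.filter (fun l => k < l), cfKZ z v w i j k l • (Ω i j * Ω k l))
      = (2⁻¹ : ℂ) • ∑ i : Fin n, ∑ j : Fin n, ∑ k : Fin n,
          ∑ l ∈ univ.filter (fun l => k < l), cfKZ z v w i j k l • (Ω i j * Ω k l) := by
    refine halfSum _ ?_ ?_
    · intro i j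
      refine Finset.sum_congr rfl fun k _ => Finset.sum_congr rfl fun l _ => ?_
      rw [cf_sym1, hsymm j i]
    · intro i
      refine Finset.sum_eq_zero fun k _ => Finset.sum_eq_zero fun l _ => ?_
      rw [cf_diag1, zero_smul]
  have hinner : ∀ i j : Fin n, (∑ k : Fin n, ∑ l ∈ univ.filter (fun l => k < l),
      cfKZ z v w i j k l • (Ω i j * Ω k l))
      = (2⁻¹ : ℂ) • ∑ k : Fin n, ∑ l : Fin n, cfKZ z v w i j k l • (Ω i j * Ω k l) := by
    intro i j
    refine halfSum _ ?_ ?_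
    · intro k l
      rw [cf_sym2, hsymm l k]
    · intro k
      rw [cf_diag2, zero_smul]
  rw [houter, Finset.sum_congr rfl fun i (_ : i ∈ univ) =>
    Finset.sum_congr rfl fun j (_ : j ∈ univ) => hinner i j]
  simp only [← Finset.smul_sum]
  -- now reduce to the full quadruple sum T
  suffices hT : (∑ i : Fin n, ∑ j : Fin n, ∑ k : Fin n, ∑ l : Fin n,
      cfKZ z v w i j k l • (Ω i j * Ω k l)) = 0 by
    simp [hT]
  -- T + T = G
  have swapT : (∑ i : Fin n, ∑ j : Fin n, ∑ k : Fin n, ∑ l : Fin n,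
      cfKZ z v w i j k l • (Ω i j * Ω k l))
      = ∑ i : Fin n, ∑ j : Fin n, ∑ k : Fin n, ∑ l : Fin n,
        cfKZ z v w k l i j • (Ω k l * Ω i j) :=
    calc (∑ i : Fin n, ∑ j : Fin n, ∑ k : Fin n, ∑ l : Fin n,
        cfKZ z v w i j k l • (Ω i j * Ω k l))
        = ∑ p : Fin n × Fin n, ∑ q : Fin n × Fin n,
            cfKZ z v w p.1 p.2 q.1 q.2 • (Ω p.1 p.2 * Ω q.1 q.2) := by
          simp [Fintype.sum_prod_type]
      _ = ∑ p : Fin n × Fin n, ∑ q : Fin n × Fin n,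
            cfKZ z v w q.1 q.2 p.1 p.2 • (Ω q.1 q.2 * Ω p.1 p.2) := Finset.sum_comm
      _ = _ := by simp [Fintype.sum_prod_type]
  have hG : (∑ i : Fin n, ∑ j : Fin n, ∑ k : Fin n, ∑ l : Fin n, gqKZ Ω z v w i j k l) = 0 := by
    rw [Finset.sum_congr rfl fun i (_ : i ∈ univ) => Finset.sum_congr rfl
      fun j (_ : j ∈ univ) => gq_inner2 Ω z v w hsymm hdisj i j]
    simp only [Finset.sum_add_distrib]
    have hN2 : (∑ i : Fin n, ∑ j : Fin n, ∑ l : Fin n, gqKZ Ω z v w i j j l)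
        = ∑ i : Fin n, ∑ j : Fin n, ∑ l : Fin n, gqKZ Ω z v w i j i l := by
      rw [Finset.sum_comm]
      exact Finset.sum_congr rfl fun y _ => Finset.sum_congr rfl fun x _ =>
        Finset.sum_congr rfl fun l _ => gq_sym1 Ω z v w hsymm y x y l
    rw [hN2, gq_triple Ω z v w hsymm hbraid hz]
    simp
  have hTT : (∑ i : Fin n, ∑ j : Fin n, ∑ k : Fin n, ∑ l : Fin n,
      cfKZ z v w i j k l • (Ω i j * Ω k l))
      + (∑ i : Fin n, ∑ j : Fin n, ∑ k : Fin n, ∑ l : Fin n,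
        cfKZ z v w i j k l • (Ω i j * Ω k l)) = 0 := by
    nth_rewrite 2 [swapT]
    simp only [← Finset.sum_add_distrib]
    rw [← hG]
    refine Finset.sum_congr rfl fun i _ => Finset.sum_congr rfl fun j _ =>
      Finset.sum_congr rfl fun k _ => Finset.sum_congr rfl fun l _ => ?_
    rw [cf_anti z v w i j k l, neg_smul, gqKZ, smul_sub]
    abel
  have h2T : (2 : ℂ) • (∑ i : Fin n, ∑ j : Fin n, ∑ k : Fin n, ∑ l : Fin n,
      cfKZ z v w i j k l • (Ω i j * Ω k l)) = 0 := by
    rw [two_smul]; exact hTT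
  calc (∑ i : Fin n, ∑ j : Fin n, ∑ k : Fin n, ∑ l : Fin n,
      cfKZ z v w i j k l • (Ω i j * Ω k l))
      = (2⁻¹ : ℂ) • ((2 : ℂ) • ∑ i : Fin n, ∑ j : Fin n, ∑ k : Fin n, ∑ l : Fin n,
          cfKZ z v w i j k l • (Ω i j * Ω k l)) := by rw [smul_smul]; norm_num
    _ = 0 := by rw [h2T, smul_zero]

end

lemma connDeriv {A : Type*} [NormedRing A] [NormedAlgebra ℂ A] {n : ℕ}
    (Ω : Fin n → Fin n → A) (z u : Fin n → ℂ) (hz : Function.Injective z) :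
    HasFDerivAt
      (fun y : Fin n → ℂ => ∑ i : Fin n, ∑ j ∈ univ.filter (fun j => i < j),
        ((u i - u j) / (y i - y j)) • Ω i j)
      (∑ i : Fin n, ∑ j ∈ univ.filter (fun j => i < j),
        (((u i - u j) • ((ContinuousLinearMap.smulRight (1 : ℂ →L[ℂ] ℂ) (-((z i - z j) ^ 2)⁻¹)).comp
          (ContinuousLinearMap.proj (R := ℂ) (φ := fun _ : Fin n => ℂ) i
            - ContinuousLinearMap.proj j)))).smulRight (Ω i j)) z := by
  apply HasFDerivAt.fun_sum
  intro i _
  apply HasFDerivAt.fun_sum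
  intro j hj
  have hij : i ≠ j := ne_of_lt (mem_filter.mp hj).2
  have hne : z i - z j ≠ 0 := sub_ne_zero.mpr (fun e => hij (hz e))
  have hL := ((ContinuousLinearMap.proj (R := ℂ) (φ := fun _ : Fin n => ℂ) i).hasFDerivAt
      (x := z)).sub ((ContinuousLinearMap.proj (R := ℂ) (φ := fun _ : Fin n => ℂ) j).hasFDerivAt
      (x := z))
  have h1 := (hasFDerivAt_inv hne).comp z hL
  have h2 := (h1.const_mul (u i - u j)).smul_const (Ω i j)
  simp only [div_eq_mul_inv]
  exact h2


/-- **Flatness of the formal Knizhnik–Zamolodchikov connection.**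
If the elements `Ω i j` of an associative algebra satisfy the infinitesimal pure
braid relations, then the connection `Ω = Σ_{i<j} Ω i j • ω i j` on the
configuration space of `n` distinct points in ℂ has vanishing curvature
`dΩ + Ω∧Ω = 0`, evaluated at any point `z` with distinct coordinates on any pair
of tangent vectors `v, w`.  Here `ω i j = (dz i − dz j)/(z i − z j)`, the exterior
derivative is expressed via `fderiv`, and the wedge product of the `A`-valued
1-form with itself uses the algebra product on coefficients. -/
theorem formal_KZ_connection_flat {A : Type*} [NormedRing A] [NormedAlgebra ℂ A] (n : ℕ)
    (Ω : Fin n → Fin n → A)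
    (hsymm : ∀ i j, Ω j i = Ω i j)
    (hdisj : ∀ i j k l : Fin n, i ≠ k → i ≠ l → j ≠ k → j ≠ l →
      Ω i j * Ω k l = Ω k l * Ω i j)
    (hbraid : ∀ i j k : Fin n, i ≠ j → j ≠ k → i ≠ k →
      Ω i j * (Ω i k + Ω j k) = (Ω i k + Ω j k) * Ω i j)
    (z v w : Fin n → ℂ) (hz : Function.Injective z) :
    (let ω : Fin n → Fin n → (Fin n → ℂ) → (Fin n → ℂ) → ℂ :=
       fun i j y u => (u i - u j) / (y i - y j)
     let conn : (Fin n → ℂ) → (Fin n → ℂ) → A := fun y u =>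
       ∑ i : Fin n, ∑ j ∈ univ.filter (fun j => i < j), ω i j y u • Ω i j
     (fderiv ℂ (fun y => conn y w) z v - fderiv ℂ (fun y => conn y v) z w)
       + ∑ i : Fin n, ∑ j ∈ univ.filter (fun j => i < j), ∑ k : Fin n,
           ∑ l ∈ univ.filter (fun l => k < l),
           (ω i j z v * ω k l z w - ω i j z w * ω k l z v) • (Ω i j * Ω k l)) = 0 := by
  show (fderiv ℂ (fun y => ∑ i : Fin n, ∑ j ∈ univ.filter (fun j => i < j),
        ((w i - w j) / (y i - y j)) • Ω i j) z v
      - fderiv ℂ (fun y => ∑ i : Fin n, ∑ j ∈ univ.filter (fun j => i < j),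
        ((v i - v j) / (y i - y j)) • Ω i j) z w)
      + (∑ i : Fin n, ∑ j ∈ univ.filter (fun j => i < j), ∑ k : Fin n,
          ∑ l ∈ univ.filter (fun l => k < l), cfKZ z v w i j k l • (Ω i j * Ω k l)) = 0
  rw [(connDeriv Ω z w hz).fderiv, (connDeriv Ω z v hz).fderiv,
    quad_zero Ω z v w hsymm hdisj hbraid hz, add_zero]
  simp only [ContinuousLinearMap.sum_apply, ContinuousLinearMap.smulRight_apply,
    ContinuousLinearMap.coe_comp', Function.comp_apply, ContinuousLinearMap.smul_apply,
    ContinuousLinearMap.sub_apply, ContinuousLinearMap.proj_apply, smul_eq_mul, ContinuousLinearMap.one_apply]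
  rw [← Finset.sum_sub_distrib]
  refine Finset.sum_eq_zero fun i _ => ?_
  rw [← Finset.sum_sub_distrib]
  refine Finset.sum_eq_zero fun j _ => ?_
  rw [← sub_smul, show (w i - w j) * ((v i - v j) * -((z i - z j) ^ 2)⁻¹)
    - (v i - v j) * ((w i - w j) * -((z i - z j) ^ 2)⁻¹) = 0 by ring, zero_smul]
end

section
/- The holonomy of a connection with values in a positively-graded complete algebra exists and is given by the iterated integral series: if Ω is a degree-1 homogeneous A-valued 1-form pulled back to an interval I = [a,b] as f(t)dt, then the function h(t) = 1 + Σ_{m≥1} ∫_{a ≤ t1 ≤ … ≤ tm ≤ t} f(tm)⋯f(t1) dtm⋯dt1 satisfies h(a) = 1 and h'(t) = f(t)·h(t). -/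
open MeasureTheory Set

variable {M : ℕ → Type*} [∀ m, NormedAddCommGroup (M m)] [∀ m, NormedSpace ℂ (M m)]
  [∀ m, FiniteDimensional ℂ (M m)] [∀ m, CompleteSpace (M m)]

/-- The degree-`m` iterated integral `∫_{a ≤ t₁ ≤ … ≤ tₘ ≤ t} f(tₘ)⋯f(t₁)`,
written recursively: `h₀ ≡ 1` (the unit `e ∈ M 0`) and
`h_{m+1}(t) = ∫_a^t f(s)·h_m(s) ds`, with the product `μ 1 m` landing in
degree `1 + m = m + 1`. -/
noncomputable def iterInt (μ : ∀ i j : ℕ, M i →ₗ[ℂ] M j →ₗ[ℂ] M (i + j))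
    (e : M 0) (f : ℝ → M 1) (a : ℝ) : (m : ℕ) → ℝ → M m
  | 0 => fun _ => e
  | m + 1 => fun t =>
      cast (congrArg M (Nat.add_comm 1 m)) (∫ s in a..t, μ 1 m (f s) (iterInt μ e f a m s))

private lemma cast_zero_aux {i j : ℕ} (h : i = j) :
    cast (congrArg M h) (0 : M i) = 0 := by subst h; rfl

private lemma cast_hasDerivWithinAt_aux {i j : ℕ} (h : i = j) {g : ℝ → M i} {g' : M i}
    {s : Set ℝ} {t : ℝ} (hg : HasDerivWithinAt g g' s t) :
    HasDerivWithinAt (fun x => cast (congrArg M h) (g x)) (cast (congrArg M h) g') s t := by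
  subst h; simpa using hg

private lemma cast_continuousOn_aux {i j : ℕ} (h : i = j) {g : ℝ → M i}
    {s : Set ℝ} (hg : ContinuousOn g s) :
    ContinuousOn (fun x => cast (congrArg M h) (g x)) s := by
  subst h; simpa using hg

/-- **Existence of holonomy via iterated integrals.**  Let `A = ∏ₘ M m` be the
completion of a graded algebra of finite type and let `f : [a,b] → M 1` be a
continuous degree-1 connection coefficient (the pullback `B*Ω = f(t)dt`).  Then
`h(t) = 1 + Σ_{m≥1} h_m(t)` (with degree-`m` component `iterInt … m t`) satisfies
`h(a) = 1` and solves the holonomy ODE `h'(t) = f(t)·h(t)` degreewise: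
the degree-0 component is constant, and the derivative of the degree-`(m+1)`
component is the degree-`(m+1)` component of `f(t)·h(t)`, namely
`μ 1 m (f t) (h_m(t))`. -/
theorem holonomy_iterated_integral
    (μ : ∀ i j : ℕ, M i →ₗ[ℂ] M j →ₗ[ℂ] M (i + j)) (e : M 0)
    (a b : ℝ) (hab : a ≤ b) (f : ℝ → M 1) (hf : ContinuousOn f (Icc a b)) :
    iterInt μ e f a 0 a = e ∧
    (∀ m : ℕ, iterInt μ e f a (m + 1) a = 0) ∧
    (∀ t ∈ Icc a b,
      HasDerivWithinAt (iterInt μ e f a 0) 0 (Icc a b) t ∧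
      ∀ m : ℕ, HasDerivWithinAt (iterInt μ e f a (m + 1))
        (cast (congrArg M (Nat.add_comm 1 m)) (μ 1 m (f t) (iterInt μ e f a m t)))
        (Icc a b) t) := by
  -- the continuous bilinear version of the multiplication
  have hμcont : ∀ m : ℕ, Continuous
      (fun p : M 1 × M m => μ 1 m p.1 p.2) := by
    intro m
    let B : M 1 →ₗ[ℂ] M m →L[ℂ] M (1 + m) :=
      (LinearMap.toContinuousLinearMap :
        (M m →ₗ[ℂ] M (1 + m)) ≃ₗ[ℂ] (M m →L[ℂ] M (1 + m))).toLinearMap ∘ₗ μ 1 m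
    have hB : Continuous B := B.continuous_of_finiteDimensional
    have : Continuous (fun p : M 1 × M m => (B p.1) p.2) :=
      isBoundedBilinearMap_apply.continuous.comp
        ((hB.comp continuous_fst).prodMk continuous_snd)
    simpa [B] using this
  -- continuity of the integrands and of the iterated integrals
  have key : ∀ m : ℕ, ContinuousOn (iterInt μ e f a m) (Icc a b) := by
    intro m
    induction m with
    | zero => exact continuousOn_const
    | succ m ih =>
      have hg : ContinuousOn (fun s => μ 1 m (f s) (iterInt μ e f a m s)) (Icc a b) :=
        (hμcont m).comp_continuousOn (hf.prodMk ih)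
      have : ContinuousOn
          (fun t => ∫ s in a..t, μ 1 m (f s) (iterInt μ e f a m s)) (Icc a b) := by
        rw [show Icc a b = uIcc a b from (uIcc_of_le hab).symm]
        exact intervalIntegral.continuousOn_primitive_interval'
          ((hg.mono (by rw [uIcc_of_le hab])).intervalIntegrable)
          (by rw [uIcc_of_le hab]; exact left_mem_Icc.2 hab)
      exact cast_continuousOn_aux (Nat.add_comm 1 m) this
  refine ⟨rfl, fun m => ?_, fun t ht => ⟨hasDerivWithinAt_const _ _ _, fun m => ?_⟩⟩
  · show cast _ _ = _
    rw [intervalIntegral.integral_same]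
    exact cast_zero_aux (Nat.add_comm 1 m)
  · -- the FTC step
    haveI : Fact (t ∈ Icc a b) := ⟨ht⟩
    set g : ℝ → M (1 + m) := fun s => μ 1 m (f s) (iterInt μ e f a m s) with hgdef
    have hg : ContinuousOn g (Icc a b) := (hμcont m).comp_continuousOn (hf.prodMk (key m))
    have hint : IntervalIntegrable g volume a t :=
      (hg.mono (by rw [uIcc_of_le ht.1]; exact Icc_subset_Icc le_rfl ht.2)).intervalIntegrable
    have hmeas : StronglyMeasurableAtFilter g (nhdsWithin t (Icc a b)) :=
      hg.stronglyMeasurableAtFilter_nhdsWithin measurableSet_Icc t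
    have hd : HasDerivWithinAt (fun u => ∫ s in a..u, g s) (g t) (Icc a b) t :=
      intervalIntegral.integral_hasDerivWithinAt_right hint hmeas (hg t ht)
    exact cast_hasDerivWithinAt_aux (Nat.add_comm 1 m) hd
end
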